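/- Let d, m ≥ 1 and p ≥ 1. Let 𝒳 ⊆ ℝ^m be a compact set of Lebesgue measure zero, and let ρ : ℝ^m → ℝ^m be a bounded Borel map which is continuous at every point of ℝ^m ∖ 𝒳. Let Ω ⊆ ℝ^d be a bounded measurable set, let Λ > 0, and let v_j, v : Ω → ℝ^m be measurable maps such that |v_j(x)| ≤ Λ for a.e. x ∈ Ω and all j, and v_j → v almost everywhere on Ω as j → +∞. Then for every M > 0, lim_{j→+∞} ∫_{B_M^m} ( ∫_Ω |ρ(v_j(x) − y) − ρ(v(x) − y)|^p dx ) dy = 0. -/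

import Mathlib

open MeasureTheory
open scoped ENNReal

/-- `L^p`-continuity of the reprojection operator `Φ(v) : y ↦ ρ∘(v - y)` (Lemma 3.6):
if `ρ` is bounded Borel and continuous outside a compact null set `𝒳`, `v_j` are
uniformly bounded on `Ω` and converge a.e. to `v`, then
`∫_{B_M} ∫_Ω |ρ(v_j(x) - y) - ρ(v(x) - y)|^p dx dy → 0`. -/
theorem reprojection_Lp_convergence (d m : ℕ) (hd : 1 ≤ d) (hm : 1 ≤ m)
    (p : ℝ) (hp : 1 ≤ p)
    (𝒳 : Set (EuclideanSpace ℝ (Fin m))) (h𝒳c : IsCompact 𝒳) (h𝒳0 : volume 𝒳 = 0)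
    (ρ : EuclideanSpace ℝ (Fin m) → EuclideanSpace ℝ (Fin m))
    (hρm : Measurable ρ) (B : ℝ) (hρb : ∀ z, ‖ρ z‖ ≤ B)
    (hρc : ∀ z ∉ 𝒳, ContinuousAt ρ z)
    (Ω : Set (EuclideanSpace ℝ (Fin d))) (hΩm : MeasurableSet Ω)
    (hΩb : Bornology.IsBounded Ω)
    (Λ : ℝ) (hΛ : 0 < Λ)
    (v : ℕ → EuclideanSpace ℝ (Fin d) → EuclideanSpace ℝ (Fin m))
    (v₀ : EuclideanSpace ℝ (Fin d) → EuclideanSpace ℝ (Fin m))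
    (hvm : ∀ j, Measurable (v j)) (hv₀m : Measurable v₀)
    (hvΛ : ∀ j, ∀ᵐ x ∂(volume.restrict Ω), ‖v j x‖ ≤ Λ)
    (hconv : ∀ᵐ x ∂(volume.restrict Ω),
      Filter.Tendsto (fun j => v j x) Filter.atTop (nhds (v₀ x)))
    (M : ℝ) (hM : 0 < M) :
    Filter.Tendsto
      (fun j => ∫⁻ y in Metric.ball (0 : EuclideanSpace ℝ (Fin m)) M,
        ∫⁻ x in Ω, ENNReal.ofReal (‖ρ (v j x - y) - ρ (v₀ x - y)‖ ^ p))
      Filter.atTop (nhds 0) := by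
  set μy := volume.restrict (Metric.ball (0 : EuclideanSpace ℝ (Fin m)) M) with hμy
  set μx := volume.restrict Ω with hμx
  haveI : IsFiniteMeasure μx :=
    ⟨by simpa [hμx, Measure.restrict_apply_univ] using hΩb.measure_lt_top⟩
  haveI : IsFiniteMeasure μy :=
    ⟨by simpa [hμy, Measure.restrict_apply_univ] using measure_ball_lt_top⟩
  set μ := μy.prod μx with hμ
  have hp0 : 0 < p := lt_of_lt_of_le one_pos hp
  have hB0 : 0 ≤ B := le_trans (norm_nonneg _) (hρb 0)
  -- F j as product function
  set F : ℕ → EuclideanSpace ℝ (Fin m) × EuclideanSpace ℝ (Fin d) → ℝ≥0∞ :=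
    fun j z => ENNReal.ofReal (‖ρ (v j z.2 - z.1) - ρ (v₀ z.2 - z.1)‖ ^ p) with hF
  have hFmeas : ∀ j, Measurable (F j) := by
    intro j
    have h : Measurable (fun z : EuclideanSpace ℝ (Fin m) × EuclideanSpace ℝ (Fin d) =>
        ρ (v j z.2 - z.1) - ρ (v₀ z.2 - z.1)) :=
      (hρm.comp (((hvm j).comp measurable_snd).sub measurable_fst)).sub
        (hρm.comp ((hv₀m.comp measurable_snd).sub measurable_fst))
    exact ((Real.continuous_rpow_const hp0.le).measurable.comp h.norm).ennreal_ofReal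
  have key : ∀ j, (∫⁻ y in Metric.ball (0 : EuclideanSpace ℝ (Fin m)) M,
      ∫⁻ x in Ω, ENNReal.ofReal (‖ρ (v j x - y) - ρ (v₀ x - y)‖ ^ p))
      = ∫⁻ z, F j z ∂μ := by
    intro j
    rw [hμ, lintegral_prod _ (hFmeas j).aemeasurable]
  refine Filter.Tendsto.congr (fun j => (key j).symm) ?_
  -- the bad set for 𝒳
  have h𝒳meas : MeasurableSet 𝒳 := h𝒳c.isClosed.measurableSet
  have hbad : ∀ᵐ z ∂μ, v₀ z.2 - z.1 ∉ 𝒳 := by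
    have hSmeas : MeasurableSet {z : EuclideanSpace ℝ (Fin m) × EuclideanSpace ℝ (Fin d) |
        v₀ z.2 - z.1 ∈ 𝒳} :=
      ((hv₀m.comp measurable_snd).sub measurable_fst) h𝒳meas
    rw [ae_iff]
    have : μ {z : EuclideanSpace ℝ (Fin m) × EuclideanSpace ℝ (Fin d) |
        v₀ z.2 - z.1 ∈ 𝒳} = 0 := by
      rw [hμ, Measure.prod_apply_symm hSmeas]
      have hsec : ∀ x : EuclideanSpace ℝ (Fin d),
          μy {a : EuclideanSpace ℝ (Fin m) | v₀ x - a ∈ 𝒳} = 0 := by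
        intro x
        have hle : μy ((fun y : EuclideanSpace ℝ (Fin m) => v₀ x - y) ⁻¹' 𝒳)
            ≤ volume ((fun y : EuclideanSpace ℝ (Fin m) => v₀ x - y) ⁻¹' 𝒳) :=
          Measure.restrict_le_self _
        have heq : volume ((fun y : EuclideanSpace ℝ (Fin m) => v₀ x - y) ⁻¹' 𝒳)
            = volume 𝒳 :=
          (Measure.measurePreserving_sub_left volume (v₀ x)).measure_preimage
            h𝒳meas.nullMeasurableSet
        exact le_antisymm (hle.trans_eq (heq.trans h𝒳0)) zero_le
      simp only [Set.preimage_setOf_eq]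
      simp [hsec]
    simpa using this
  -- a.e. convergence lifted to the product
  have hconv' : ∀ᵐ z ∂μ, Filter.Tendsto (fun j => v j z.2) Filter.atTop (nhds (v₀ z.2)) := by
    rw [hμ]
    exact Measure.quasiMeasurePreserving_snd.ae hconv
  have main : Filter.Tendsto (fun j => ∫⁻ z, F j z ∂μ) Filter.atTop
      (nhds (∫⁻ _ : EuclideanSpace ℝ (Fin m) × EuclideanSpace ℝ (Fin d), (0 : ℝ≥0∞) ∂μ)) := by
    refine tendsto_lintegral_of_dominated_convergence
      (fun _ => ENNReal.ofReal ((2 * B) ^ p)) hFmeas ?_ ?_ ?_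
    · intro j
      filter_upwards with z
      apply ENNReal.ofReal_le_ofReal
      apply Real.rpow_le_rpow (norm_nonneg _) _ (le_of_lt hp0)
      calc ‖ρ (v j z.2 - z.1) - ρ (v₀ z.2 - z.1)‖
          ≤ ‖ρ (v j z.2 - z.1)‖ + ‖ρ (v₀ z.2 - z.1)‖ := norm_sub_le _ _
        _ ≤ B + B := add_le_add (hρb _) (hρb _)
        _ = 2 * B := by ring
    · rw [lintegral_const]
      exact ENNReal.mul_ne_top ENNReal.ofReal_ne_top (measure_ne_top μ _)
    · filter_upwards [hbad, hconv'] with z hz1 hz2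
      have h1 : Filter.Tendsto (fun j => v j z.2 - z.1) Filter.atTop (nhds (v₀ z.2 - z.1)) :=
        hz2.sub_const z.1
      have h2 : Filter.Tendsto (fun j => ρ (v j z.2 - z.1)) Filter.atTop
          (nhds (ρ (v₀ z.2 - z.1))) := (hρc _ hz1).tendsto.comp h1
      have h3 : Filter.Tendsto (fun j => ‖ρ (v j z.2 - z.1) - ρ (v₀ z.2 - z.1)‖)
          Filter.atTop (nhds 0) := by
        simpa using (h2.sub (tendsto_const_nhds (x := ρ (v₀ z.2 - z.1)))).norm
      have h4 : Filter.Tendsto (fun j => ‖ρ (v j z.2 - z.1) - ρ (v₀ z.2 - z.1)‖ ^ p)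
          Filter.atTop (nhds 0) := by
        have := (Real.continuousAt_rpow_const 0 p (Or.inr hp0.le)).tendsto.comp h3
        simpa [Function.comp_def, Real.zero_rpow (ne_of_gt hp0)] using this
      simpa [hF, Function.comp_def] using (ENNReal.continuous_ofReal.tendsto 0).comp h4
  simpa using main
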